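/- If μ and ν are probability measures on a metric space X, each uniformly distributed over n points (i.e., μ = (1/n)Σ δ_{x_j}, ν = (1/n)Σ δ_{y_j}), then W_1(μ,ν) = min_{σ∈S_n} (1/n) Σ_{j=0}^{n-1} d(x_j, y_{σ(j)}). -/

import Mathlib

open Filter MeasureTheory Topology
open scoped ENNReal NNReal

/-- The Wasserstein distance `W₁(μ,ν)`: the infimum over all couplings `π` of `μ` and `ν`
of `∫ d(x,y) dπ(x,y)`. -/
noncomputable def W1 {X : Type*} [MetricSpace X] [MeasurableSpace X] (μ ν : Measure X) : ℝ :=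
  sInf ((fun π : Measure (X × X) => ∫ p, dist p.1 p.2 ∂π) ''
    {π | π.map Prod.fst = μ ∧ π.map Prod.snd = ν})

lemma map_finsum_measure {α β ι : Type*} [MeasurableSpace α] [MeasurableSpace β] {g : α → β}
    (hg : Measurable g) (s : Finset ι) (m : ι → Measure α) :
    (∑ i ∈ s, m i).map g = ∑ i ∈ s, (m i).map g := by
  induction s using Finset.cons_induction with
  | empty => simp
  | cons i s hi ih => simp [Finset.sum_cons, Measure.map_add _ _ hg, ih]

lemma dist_integrable_dirac {X : Type*} [MetricSpace X] [MeasurableSpace X] [BorelSpace X]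
    (a : X × X) : Integrable (fun p : X × X => dist p.1 p.2) (Measure.dirac a) := by
  have hae : (fun _ : X × X => dist a.1 a.2) =ᵐ[Measure.dirac a]
      (fun p : X × X => dist p.1 p.2) := by
    rw [Filter.EventuallyEq, MeasureTheory.ae_dirac_eq]
    simp
  exact (integrable_const _).congr hae

lemma cost_perm {X : Type*} [MetricSpace X] [MeasurableSpace X] [BorelSpace X]
    (n : ℕ) (x y : Fin n → X) (σ : Equiv.Perm (Fin n)) :
    ∫ p, dist p.1 p.2 ∂(((n : ℝ≥0∞))⁻¹ • ∑ j : Fin n, Measure.dirac ((x j, y (σ j)) : X × X))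
      = (1 / (n : ℝ)) * ∑ j : Fin n, dist (x j) (y (σ j)) := by
  rw [integral_smul_measure, integral_finset_sum_measure (fun i _ => dist_integrable_dirac _)]
  simp [integral_dirac, ENNReal.toReal_inv, one_div, smul_eq_mul]

lemma marginals_perm {X : Type*} [MetricSpace X] [MeasurableSpace X] [BorelSpace X]
    (n : ℕ) (x y : Fin n → X) (σ : Equiv.Perm (Fin n)) :
    (((n : ℝ≥0∞))⁻¹ • ∑ j : Fin n, Measure.dirac ((x j, y (σ j)) : X × X)).map Prod.fst
        = ((n : ℝ≥0∞))⁻¹ • ∑ j : Fin n, Measure.dirac (x j) ∧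
    (((n : ℝ≥0∞))⁻¹ • ∑ j : Fin n, Measure.dirac ((x j, y (σ j)) : X × X)).map Prod.snd
        = ((n : ℝ≥0∞))⁻¹ • ∑ j : Fin n, Measure.dirac (y j) := by
  constructor
  · rw [Measure.map_smul, map_finsum_measure measurable_fst]
    simp [Measure.map_dirac' measurable_fst]
  · rw [Measure.map_smul, map_finsum_measure measurable_snd]
    simp only [Measure.map_dirac' measurable_snd]
    congr 1
    exact Equiv.sum_comp σ fun j => Measure.dirac (y j)

set_option maxHeartbeats 1000000 in
lemma lower_bound {X : Type*} [MetricSpace X] [MeasurableSpace X] [BorelSpace X]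
    (n : ℕ) (hn : 0 < n) (x y : Fin n → X) (π : Measure (X × X))
    (h1 : π.map Prod.fst = ((n : ℝ≥0∞))⁻¹ • ∑ j : Fin n, Measure.dirac (x j))
    (h2 : π.map Prod.snd = ((n : ℝ≥0∞))⁻¹ • ∑ j : Fin n, Measure.dirac (y j)) :
    (⨅ σ : Equiv.Perm (Fin n), (1 / (n : ℝ)) * ∑ j : Fin n, dist (x j) (y (σ j)))
      ≤ ∫ p, dist p.1 p.2 ∂π := by
  classical
  have hnR : (0:ℝ) < n := Nat.cast_pos.2 hn
  have hne : (n : ℝ≥0∞) ≠ 0 := Nat.cast_ne_zero.2 hn.ne'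
  have htop : (n : ℝ≥0∞) ≠ ⊤ := ENNReal.natCast_ne_top n
  set S : Finset X := Finset.image x Finset.univ with hS
  set T : Finset X := Finset.image y Finset.univ with hT
  set mx : X → ℕ := fun s => (Finset.univ.filter fun k => x k = s).card with hmx
  set my : X → ℕ := fun t => (Finset.univ.filter fun k => y k = t).card with hmy
  -- μ of a singleton
  have hμs : ∀ s : X, π (Prod.fst ⁻¹' {s}) = (n : ℝ≥0∞)⁻¹ * mx s := by
    intro s
    rw [← Measure.map_apply measurable_fst (measurableSet_singleton s), h1]
    rw [Measure.smul_apply, Measure.finset_sum_apply]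
    simp only [Measure.dirac_apply, smul_eq_mul]
    congr 1
    simp only [Set.indicator_apply, Set.mem_singleton_iff, Pi.one_apply]
    rw [Finset.sum_boole]
  have hνt : ∀ t : X, π (Prod.snd ⁻¹' {t}) = (n : ℝ≥0∞)⁻¹ * my t := by
    intro t
    rw [← Measure.map_apply measurable_snd (measurableSet_singleton t), h2]
    rw [Measure.smul_apply, Measure.finset_sum_apply]
    simp only [Measure.dirac_apply, smul_eq_mul]
    congr 1
    simp only [Set.indicator_apply, Set.mem_singleton_iff, Pi.one_apply]
    rw [Finset.sum_boole]
  -- complements are null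
  have hSc : π (Prod.fst ⁻¹' (↑S : Set X)ᶜ) = 0 := by
    rw [← Measure.map_apply measurable_fst S.measurableSet.compl, h1]
    rw [Measure.smul_apply, Measure.finset_sum_apply]
    have : ∀ j : Fin n, Measure.dirac (x j) (↑S : Set X)ᶜ = 0 := by
      intro j
      rw [Measure.dirac_apply]
      simp [hS, Set.indicator_apply, Finset.mem_image]
    simp [this]
  have hTc : π (Prod.snd ⁻¹' (↑T : Set X)ᶜ) = 0 := by
    rw [← Measure.map_apply measurable_snd T.measurableSet.compl, h2]
    rw [Measure.smul_apply, Measure.finset_sum_apply]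
    have : ∀ j : Fin n, Measure.dirac (y j) (↑T : Set X)ᶜ = 0 := by
      intro j
      rw [Measure.dirac_apply]
      simp [hT, Set.indicator_apply, Finset.mem_image]
    simp [this]
  -- π is a probability measure
  have hprob : IsProbabilityMeasure π := by
    constructor
    have : π Set.univ = π (Prod.fst ⁻¹' Set.univ) := by simp
    rw [this, ← Measure.map_apply measurable_fst MeasurableSet.univ, h1]
    rw [Measure.smul_apply, Measure.finset_sum_apply]
    simp [ENNReal.inv_mul_cancel hne htop]
  haveI := hprob
  -- row marginals over the support
  have hrow : ∀ i : Fin n, ∑ t ∈ T, π {((x i, t) : X × X)} = (n : ℝ≥0∞)⁻¹ * mx (x i) := by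
    intro i
    have hunion : (⋃ t ∈ T, ({((x i, t) : X × X)} : Set (X × X))) = {x i} ×ˢ (↑T : Set X) := by
      ext p; simp only [Set.mem_iUnion, Set.mem_singleton_iff, Set.mem_prod, Finset.mem_coe, Prod.ext_iff]; aesop
    have hdisj : (↑T : Set X).PairwiseDisjoint fun t => ({((x i, t) : X × X)} : Set (X × X)) := by
      intro a _ b _ hab
      simp [Set.disjoint_singleton, Prod.ext_iff, hab]
    have h3 : π ({x i} ×ˢ (↑T : Set X)) = ∑ t ∈ T, π {((x i, t) : X × X)} := by
      rw [← hunion, measure_biUnion_finset hdisj (fun t _ => measurableSet_singleton _)]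
    have hsub : Prod.fst ⁻¹' ({x i} : Set X) ⊆
        ({x i} ×ˢ (↑T : Set X)) ∪ Prod.snd ⁻¹' (↑T : Set X)ᶜ := by
      intro p hp
      by_cases hpT : p.2 ∈ (↑T : Set X)
      · exact Or.inl ⟨hp, hpT⟩
      · exact Or.inr hpT
    have hle : π (Prod.fst ⁻¹' ({x i} : Set X)) ≤ π ({x i} ×ˢ (↑T : Set X)) := by
      calc π (Prod.fst ⁻¹' ({x i} : Set X))
          ≤ π (({x i} ×ˢ (↑T : Set X)) ∪ Prod.snd ⁻¹' (↑T : Set X)ᶜ) := measure_mono hsub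
        _ ≤ π ({x i} ×ˢ (↑T : Set X)) + π (Prod.snd ⁻¹' (↑T : Set X)ᶜ) := measure_union_le _ _
        _ = π ({x i} ×ˢ (↑T : Set X)) := by rw [hTc, add_zero]
    have hge : π ({x i} ×ˢ (↑T : Set X)) ≤ π (Prod.fst ⁻¹' ({x i} : Set X)) :=
      measure_mono (fun p hp => hp.1)
    rw [← h3, ← le_antisymm hle hge, hμs]
  have hcol : ∀ j : Fin n, ∑ s ∈ S, π {((s, y j) : X × X)} = (n : ℝ≥0∞)⁻¹ * my (y j) := by
    intro j
    have hunion : (⋃ s ∈ S, ({((s, y j) : X × X)} : Set (X × X))) = (↑S : Set X) ×ˢ {y j} := by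
      ext p; simp only [Set.mem_iUnion, Set.mem_singleton_iff, Set.mem_prod, Finset.mem_coe, Prod.ext_iff]; aesop
    have hdisj : (↑S : Set X).PairwiseDisjoint fun s => ({((s, y j) : X × X)} : Set (X × X)) := by
      intro a _ b _ hab
      simp [Set.disjoint_singleton, Prod.ext_iff, hab]
    have h3 : π ((↑S : Set X) ×ˢ {y j}) = ∑ s ∈ S, π {((s, y j) : X × X)} := by
      rw [← hunion, measure_biUnion_finset hdisj (fun s _ => measurableSet_singleton _)]
    have hsub : Prod.snd ⁻¹' ({y j} : Set X) ⊆
        ((↑S : Set X) ×ˢ {y j}) ∪ Prod.fst ⁻¹' (↑S : Set X)ᶜ := by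
      intro p hp
      by_cases hpS : p.1 ∈ (↑S : Set X)
      · exact Or.inl ⟨hpS, hp⟩
      · exact Or.inr hpS
    have hle : π (Prod.snd ⁻¹' ({y j} : Set X)) ≤ π ((↑S : Set X) ×ˢ {y j}) := by
      calc π (Prod.snd ⁻¹' ({y j} : Set X))
          ≤ π (((↑S : Set X) ×ˢ {y j}) ∪ Prod.fst ⁻¹' (↑S : Set X)ᶜ) := measure_mono hsub
        _ ≤ π ((↑S : Set X) ×ˢ {y j}) + π (Prod.fst ⁻¹' (↑S : Set X)ᶜ) := measure_union_le _ _
        _ = π ((↑S : Set X) ×ˢ {y j}) := by rw [hSc, add_zero]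
    have hge : π ((↑S : Set X) ×ˢ {y j}) ≤ π (Prod.snd ⁻¹' ({y j} : Set X)) :=
      measure_mono (fun p hp => hp.2)
    rw [← h3, ← le_antisymm hle hge, hνt]
  have hfin : ∀ p : X × X, π {p} ≠ ⊤ := fun p => measure_ne_top π _
  have hmxpos : ∀ i : Fin n, (0:ℝ) < mx (x i) := by
    intro i
    have : i ∈ Finset.univ.filter fun k => x k = x i := by simp
    exact_mod_cast Nat.cast_pos.2 (Finset.card_pos.2 ⟨i, this⟩)
  have hmypos : ∀ j : Fin n, (0:ℝ) < my (y j) := by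
    intro j
    have : j ∈ Finset.univ.filter fun k => y k = y j := by simp
    exact_mod_cast Nat.cast_pos.2 (Finset.card_pos.2 ⟨j, this⟩)
  have hmyposT : ∀ t ∈ T, (0:ℝ) < my t := by
    intro t ht
    obtain ⟨k, -, rfl⟩ := Finset.mem_image.1 ht
    exact hmypos k
  have hmxposS : ∀ s ∈ S, (0:ℝ) < mx s := by
    intro s hs
    obtain ⟨k, -, rfl⟩ := Finset.mem_image.1 hs
    exact hmxpos k
  -- real versions of the marginals
  have arow : ∀ i : Fin n, ∑ t ∈ T, (π {((x i, t) : X × X)}).toReal = mx (x i) / n := by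
    intro i
    rw [← ENNReal.toReal_sum (fun t _ => hfin _), hrow, ENNReal.toReal_mul, ENNReal.toReal_inv]
    simp [div_eq_inv_mul]
  have acol : ∀ j : Fin n, ∑ s ∈ S, (π {((s, y j) : X × X)}).toReal = my (y j) / n := by
    intro j
    rw [← ENNReal.toReal_sum (fun s _ => hfin _), hcol, ENNReal.toReal_mul, ENNReal.toReal_inv]
    simp [div_eq_inv_mul]
  -- the doubly stochastic matrix
  set M : Matrix (Fin n) (Fin n) ℝ :=
    fun i j => n * (π {((x i, y j) : X × X)}).toReal / (mx (x i) * my (y j)) with hMdef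
  have hMnn : ∀ i j, 0 ≤ M i j := by
    intro i j
    have := (hmxpos i).le
    have := (hmypos j).le
    positivity
  have hMrow : ∀ i, ∑ j, M i j = 1 := by
    intro i
    have step1 : ∀ j, M i j = ((n:ℝ) / mx (x i)) *
        ((π {((x i, y j) : X × X)}).toReal / my (y j)) := by
      intro j; rw [hMdef]; ring
    have step2 : (∑ j, (fun t => (π {((x i, t) : X × X)}).toReal / my t) (y j))
        = ∑ t ∈ T, (π {((x i, t) : X × X)}).toReal := by
      rw [Finset.sum_comp (fun t => (π {((x i, t) : X × X)}).toReal / my t) y]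
      refine Finset.sum_congr rfl fun t ht => ?_
      have h0 : (my t : ℝ) ≠ 0 := (hmyposT t ht).ne'
      rw [nsmul_eq_mul]
      show (my t : ℝ) * _ = _
      field_simp
    calc ∑ j, M i j = ((n:ℝ) / mx (x i)) *
          ∑ j, (π {((x i, y j) : X × X)}).toReal / my (y j) := by
          rw [Finset.mul_sum]; exact Finset.sum_congr rfl fun j _ => step1 j
      _ = ((n:ℝ) / mx (x i)) * (mx (x i) / n) := by rw [step2, arow]
      _ = 1 := by
          have h1 : (mx (x i):ℝ) ≠ 0 := (hmxpos i).ne'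
          have h2 : (n:ℝ) ≠ 0 := hnR.ne'
          field_simp
  have hMcol : ∀ j, ∑ i, M i j = 1 := by
    intro j
    have step1 : ∀ i, M i j = ((n:ℝ) / my (y j)) *
        ((π {((x i, y j) : X × X)}).toReal / mx (x i)) := by
      intro i; rw [hMdef]; ring
    have step2 : (∑ i, (fun s => (π {((s, y j) : X × X)}).toReal / mx s) (x i))
        = ∑ s ∈ S, (π {((s, y j) : X × X)}).toReal := by
      rw [Finset.sum_comp (fun s => (π {((s, y j) : X × X)}).toReal / mx s) x]
      refine Finset.sum_congr rfl fun s hs => ?_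
      have h0 : (mx s : ℝ) ≠ 0 := (hmxposS s hs).ne'
      rw [nsmul_eq_mul]
      show (mx s : ℝ) * _ = _
      field_simp
    calc ∑ i, M i j = ((n:ℝ) / my (y j)) *
          ∑ i, (π {((x i, y j) : X × X)}).toReal / mx (x i) := by
          rw [Finset.mul_sum]; exact Finset.sum_congr rfl fun i _ => step1 i
      _ = ((n:ℝ) / my (y j)) * (my (y j) / n) := by rw [step2, acol]
      _ = 1 := by
          have h1 : (my (y j):ℝ) ≠ 0 := (hmypos j).ne'
          have h2 : (n:ℝ) ≠ 0 := hnR.ne'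
          field_simp
  have hM : M ∈ doublyStochastic ℝ (Fin n) :=
    mem_doublyStochastic_iff_sum.2 ⟨hMnn, hMrow, hMcol⟩
  -- π is concentrated on S ×ˢ T
  have hFc : π ((↑(S ×ˢ T) : Set (X × X))ᶜ) = 0 := by
    have hsub : (↑(S ×ˢ T) : Set (X × X))ᶜ ⊆
        Prod.fst ⁻¹' (↑S : Set X)ᶜ ∪ Prod.snd ⁻¹' (↑T : Set X)ᶜ := by
      intro p hp
      rw [Set.mem_compl_iff, Finset.mem_coe, Finset.mem_product, not_and_or] at hp
      rcases hp with h | h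
      · exact Or.inl h
      · exact Or.inr h
    refine le_antisymm ?_ zero_le
    calc π (↑(S ×ˢ T) : Set (X × X))ᶜ
        ≤ π (Prod.fst ⁻¹' (↑S : Set X)ᶜ ∪ Prod.snd ⁻¹' (↑T : Set X)ᶜ) := measure_mono hsub
      _ ≤ π (Prod.fst ⁻¹' (↑S : Set X)ᶜ) + π (Prod.snd ⁻¹' (↑T : Set X)ᶜ) := measure_union_le _ _
      _ = 0 := by rw [hSc, hTc, add_zero]
  have hmemF : ∀ᵐ p ∂π, p ∈ (↑(S ×ˢ T) : Set (X × X)) := by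
    rw [MeasureTheory.ae_iff]
    exact hFc
  have hres : π.restrict (↑(S ×ˢ T) : Set (X × X)) = π :=
    Measure.restrict_eq_self_of_ae_mem hmemF
  -- integrability of the cost
  set g : X × X → ℝ := fun p => ∑ q ∈ S ×ˢ T, if p = q then dist q.1 q.2 else 0 with hgdef
  have hgmeas : Measurable g := by
    apply Finset.measurable_sum
    intro q _
    have hq : MeasurableSet {p : X × X | p = q} := by
      simpa [Set.setOf_eq_eq_singleton] using (measurableSet_singleton q)
    exact Measurable.ite hq measurable_const measurable_const
  have hgf : ∀ p ∈ S ×ˢ T, g p = dist p.1 p.2 := by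
    intro p hp
    rw [hgdef]
    simp only [Finset.sum_ite_eq (S ×ˢ T) p (fun q => dist q.1 q.2), hp, if_true]
  have hfg : (fun p : X × X => dist p.1 p.2) =ᵐ[π] g := by
    filter_upwards [hmemF] with p hp
    exact (hgf p hp).symm
  set B : ℝ := ∑ q ∈ S ×ˢ T, dist q.1 q.2 with hBdef
  have hgbd : ∀ p, ‖g p‖ ≤ B := by
    intro p
    rw [Real.norm_eq_abs]
    calc |g p| ≤ ∑ q ∈ S ×ˢ T, |if p = q then dist q.1 q.2 else 0| :=
          Finset.abs_sum_le_sum_abs _ _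
      _ ≤ B := Finset.sum_le_sum fun q _ => by
          split <;> simp [abs_of_nonneg dist_nonneg, dist_nonneg]
  have hgint : Integrable g π :=
    Integrable.mono' (integrable_const B) hgmeas.aestronglyMeasurable (ae_of_all _ hgbd)
  have hint : Integrable (fun p : X × X => dist p.1 p.2) π := hgint.congr hfg.symm
  -- the cost as a finite sum
  have hcost : ∫ p, dist p.1 p.2 ∂π = ∑ p ∈ S ×ˢ T, (π {p}).toReal * dist p.1 p.2 := by
    calc ∫ p, dist p.1 p.2 ∂π
        = ∫ p in (↑(S ×ˢ T) : Set (X × X)), dist p.1 p.2 ∂π := by rw [hres]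
      _ = ∑ p ∈ S ×ˢ T, (π {p}).toReal • dist p.1 p.2 :=
          by rw [integral_finset (hf := hint.integrableOn)]; rfl
      _ = ∑ p ∈ S ×ˢ T, (π {p}).toReal * dist p.1 p.2 := by simp [smul_eq_mul]
  -- rewrite the double sum over the matrix
  have hinner : ∀ i : Fin n,
      ∑ j, (π {((x i, y j) : X × X)}).toReal * dist (x i) (y j) / (mx (x i) * my (y j))
      = (∑ t ∈ T, (π {((x i, t) : X × X)}).toReal * dist (x i) t) / mx (x i) := by
    intro i
    rw [Finset.sum_comp
      (fun t => (π {((x i, t) : X × X)}).toReal * dist (x i) t / (mx (x i) * my t)) y,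
      Finset.sum_div]
    refine Finset.sum_congr rfl fun t ht => ?_
    have h0 : (my t : ℝ) ≠ 0 := (hmyposT t ht).ne'
    have h1 : (mx (x i) : ℝ) ≠ 0 := (hmxpos i).ne'
    rw [nsmul_eq_mul]
    show (my t : ℝ) * _ = _
    field_simp
  have houter : ∑ i, (∑ t ∈ T, (π {((x i, t) : X × X)}).toReal * dist (x i) t) / mx (x i)
      = ∑ s ∈ S, ∑ t ∈ T, (π {((s, t) : X × X)}).toReal * dist s t := by
    rw [Finset.sum_comp
      (fun s => (∑ t ∈ T, (π {((s, t) : X × X)}).toReal * dist s t) / mx s) x]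
    refine Finset.sum_congr rfl fun s hs => ?_
    have h0 : (mx s : ℝ) ≠ 0 := (hmxposS s hs).ne'
    rw [nsmul_eq_mul]
    show (mx s : ℝ) * _ = _
    field_simp
  have hdouble : (1 / (n:ℝ)) * ∑ i, ∑ j, M i j * dist (x i) (y j)
      = ∑ p ∈ S ×ˢ T, (π {p}).toReal * dist p.1 p.2 := by
    have hper : ∀ i : Fin n, (1 / (n:ℝ)) * ∑ j, M i j * dist (x i) (y j)
        = ∑ j, (π {((x i, y j) : X × X)}).toReal * dist (x i) (y j)
            / (mx (x i) * my (y j)) := by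
      intro i
      rw [Finset.mul_sum]
      refine Finset.sum_congr rfl fun j _ => ?_
      have h1 : (mx (x i) : ℝ) ≠ 0 := (hmxpos i).ne'
      have h2 : (my (y j) : ℝ) ≠ 0 := (hmypos j).ne'
      have h3 : (n : ℝ) ≠ 0 := hnR.ne'
      rw [hMdef]
      field_simp
    calc (1 / (n:ℝ)) * ∑ i, ∑ j, M i j * dist (x i) (y j)
        = ∑ i, (1 / (n:ℝ)) * ∑ j, M i j * dist (x i) (y j) := Finset.mul_sum _ _ _
      _ = ∑ i, ∑ j, (π {((x i, y j) : X × X)}).toReal * dist (x i) (y j)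
            / (mx (x i) * my (y j)) := Finset.sum_congr rfl fun i _ => hper i
      _ = ∑ i, (∑ t ∈ T, (π {((x i, t) : X × X)}).toReal * dist (x i) t) / mx (x i) :=
          Finset.sum_congr rfl fun i _ => hinner i
      _ = ∑ s ∈ S, ∑ t ∈ T, (π {((s, t) : X × X)}).toReal * dist s t := houter
      _ = ∑ p ∈ S ×ˢ T, (π {p}).toReal * dist p.1 p.2 := by rw [Finset.sum_product]
  -- Birkhoff--von Neumann
  obtain ⟨w, hw0, hw1, hwM⟩ := exists_eq_sum_perm_of_mem_doublyStochastic hM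
  have hMij : ∀ i j, M i j = ∑ σ : Equiv.Perm (Fin n), w σ * (if σ i = j then 1 else 0) := by
    intro i j
    rw [← hwM, Matrix.sum_apply]
    refine Finset.sum_congr rfl fun σ _ => ?_
    rw [Matrix.smul_apply, Equiv.Perm.permMatrix, PEquiv.toMatrix_apply, Equiv.toPEquiv_apply]
    simp [smul_eq_mul, Option.mem_def, eq_comm]
  have hswap : ∑ i, ∑ j, M i j * dist (x i) (y j)
      = ∑ σ : Equiv.Perm (Fin n), w σ * ∑ i, dist (x i) (y (σ i)) := by
    calc ∑ i, ∑ j, M i j * dist (x i) (y j)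
        = ∑ i, ∑ j, ∑ σ : Equiv.Perm (Fin n),
            w σ * (if σ i = j then dist (x i) (y j) else 0) := by
          refine Finset.sum_congr rfl fun i _ => Finset.sum_congr rfl fun j _ => ?_
          rw [hMij, Finset.sum_mul]
          refine Finset.sum_congr rfl fun σ _ => ?_
          by_cases h : σ i = j <;> simp [h]
      _ = ∑ i, ∑ σ : Equiv.Perm (Fin n), ∑ j,
            w σ * (if σ i = j then dist (x i) (y j) else 0) :=
          Finset.sum_congr rfl fun i _ => Finset.sum_comm
      _ = ∑ σ : Equiv.Perm (Fin n), ∑ i, ∑ j,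
            w σ * (if σ i = j then dist (x i) (y j) else 0) := Finset.sum_comm
      _ = ∑ σ : Equiv.Perm (Fin n), ∑ i, w σ * dist (x i) (y (σ i)) := by
          refine Finset.sum_congr rfl fun σ _ => Finset.sum_congr rfl fun i _ => ?_
          rw [← Finset.mul_sum, Finset.sum_ite_eq]
          simp
      _ = ∑ σ : Equiv.Perm (Fin n), w σ * ∑ i, dist (x i) (y (σ i)) := by
          simp [Finset.mul_sum]
  -- conclude
  have hbdd : BddBelow (Set.range fun σ : Equiv.Perm (Fin n) =>
      (1 / (n : ℝ)) * ∑ j, dist (x j) (y (σ j))) :=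
    Set.Finite.bddBelow (Set.finite_range _)
  calc (⨅ σ : Equiv.Perm (Fin n), (1 / (n : ℝ)) * ∑ j, dist (x j) (y (σ j)))
      = ∑ σ : Equiv.Perm (Fin n), w σ *
          (⨅ σ' : Equiv.Perm (Fin n), (1 / (n : ℝ)) * ∑ j, dist (x j) (y (σ' j))) := by
        rw [← Finset.sum_mul, hw1, one_mul]
    _ ≤ ∑ σ : Equiv.Perm (Fin n), w σ * ((1 / (n : ℝ)) * ∑ i, dist (x i) (y (σ i))) :=
        Finset.sum_le_sum fun σ _ => mul_le_mul_of_nonneg_left (ciInf_le hbdd σ) (hw0 σ)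
    _ = (1 / (n : ℝ)) * ∑ σ : Equiv.Perm (Fin n), w σ * ∑ i, dist (x i) (y (σ i)) := by
        rw [Finset.mul_sum]
        exact Finset.sum_congr rfl fun σ _ => by ring
    _ = (1 / (n : ℝ)) * ∑ i, ∑ j, M i j * dist (x i) (y j) := by rw [hswap]
    _ = ∑ p ∈ S ×ˢ T, (π {p}).toReal * dist p.1 p.2 := hdouble
    _ = ∫ p, dist p.1 p.2 ∂π := hcost.symm

/-- if `μ = (1/n) Σ δ_{x_j}` and `ν = (1/n) Σ δ_{y_j}` are uniformly
distributed over `n` points each, then `W₁(μ,ν) = min_{σ∈S_n} (1/n) Σ_j d(x_j, y_{σ(j)})`. -/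
theorem wasserstein_uniform_discrete {X : Type*} [MetricSpace X] [MeasurableSpace X]
    [BorelSpace X] (n : ℕ) (hn : 0 < n) (x y : Fin n → X) :
    W1 (((n : ℝ≥0∞))⁻¹ • ∑ j : Fin n, MeasureTheory.Measure.dirac (x j))
       (((n : ℝ≥0∞))⁻¹ • ∑ j : Fin n, MeasureTheory.Measure.dirac (y j)) =
      ⨅ σ : Equiv.Perm (Fin n), (1 / (n : ℝ)) * ∑ j : Fin n, dist (x j) (y (σ j)) := by
  classical
  rw [W1]
  set Cost := (fun π : Measure (X × X) => ∫ p, dist p.1 p.2 ∂π) ''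
    {π | π.map Prod.fst = ((n : ℝ≥0∞))⁻¹ • ∑ j : Fin n, Measure.dirac (x j) ∧
         π.map Prod.snd = ((n : ℝ≥0∞))⁻¹ • ∑ j : Fin n, Measure.dirac (y j)} with hCost
  have hlb : ∀ r ∈ Cost,
      (⨅ σ : Equiv.Perm (Fin n), (1 / (n : ℝ)) * ∑ j : Fin n, dist (x j) (y (σ j))) ≤ r := by
    rintro r ⟨π, ⟨hπ1, hπ2⟩, rfl⟩
    exact lower_bound n hn x y π hπ1 hπ2
  have hmem : ∀ σ : Equiv.Perm (Fin n),
      (1 / (n : ℝ)) * ∑ j : Fin n, dist (x j) (y (σ j)) ∈ Cost := by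
    intro σ
    exact ⟨((n : ℝ≥0∞))⁻¹ • ∑ j : Fin n, Measure.dirac ((x j, y (σ j)) : X × X),
      ⟨(marginals_perm n x y σ).1, (marginals_perm n x y σ).2⟩, cost_perm n x y σ⟩
  refine le_antisymm ?_ (le_csInf ⟨_, hmem 1⟩ hlb)
  refine le_ciInf fun σ => csInf_le ⟨_, hlb⟩ (hmem σ)
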